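/- (Scaling of the 3D example data.) For n ∈ ℕ and B > 0, define p₀(x) = n^{−5/4}[sin(r/n − π/2) + 1] + B for 2nπ ≤ r ≤ 4nπ and p₀ = B otherwise (r = |x|, x ∈ ℝ³), and v₀(x) = n^{−5/4}[sin(r/n − π/2) + 1] (x/r) on the same annulus, 0 otherwise. Then there exist constants 0 < c < C independent of n such that c n^{1/2} ≤ ‖p₀ − B‖²_{L²(ℝ³)} ≤ C n^{1/2} and c n^{−3/2} ≤ ‖∇p₀‖²_{L²(ℝ³)} ≤ C n^{−3/2}. Consequently, the product N₁κ ≍ n^{−1} → 0 as n → ∞ while ‖p₀ − B‖²_{L²} ≍ n^{1/2} → ∞. -/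

import Mathlib

open MeasureTheory Real Filter

noncomputable section

abbrev E3 := EuclideanSpace ℝ (Fin 3)

/-- divergence of a vector field on `ℝ³` -/
def div3 (w : E3 → E3) (x : E3) : ℝ :=
  ∑ i, fderiv ℝ (fun y => w y i) x (EuclideanSpace.single i 1)

/-- the example density perturbation: a slowly modulated radial bump of amplitude
`n^{-5/4}` supported on the annulus `2nπ ≤ |x| ≤ 4nπ`, on top of the background `B` -/
def pex (n : ℕ) (B : ℝ) (x : E3) : ℝ :=
  if 2 * n * π ≤ ‖x‖ ∧ ‖x‖ ≤ 4 * n * π then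
    (n : ℝ) ^ (-(5 : ℝ) / 4) * (Real.sin (‖x‖ / n - π / 2) + 1) + B
  else B

/-- the example (radial, hence curl-free) velocity field -/
def vex (n : ℕ) (x : E3) : E3 :=
  if 2 * n * π ≤ ‖x‖ ∧ ‖x‖ ≤ 4 * n * π then
    (((n : ℝ) ^ (-(5 : ℝ) / 4) * (Real.sin (‖x‖ / n - π / 2) + 1)) / ‖x‖) • x
  else 0
-- AUX PART (to insert after defs)

/-! ### Auxiliary calculus lemmas -/

lemma hasFDerivAt_norm3 {x : E3} (hx : x ≠ 0) :
    HasFDerivAt (fun y : E3 => ‖y‖) (innerSL ℝ ((‖x‖)⁻¹ • x)) x := by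
  have hx' : (0:ℝ) < ‖x‖ := norm_pos_iff.mpr hx
  have h1 : HasFDerivAt (fun y : E3 => ‖y‖ ^ 2)
      (2 • (innerSL ℝ x).comp (ContinuousLinearMap.id ℝ E3)) x := by
    simpa using (hasFDerivAt_id x).norm_sq
  have hs : (‖x‖ ^ 2 : ℝ) ≠ 0 := by positivity
  have h2 := (Real.hasDerivAt_sqrt hs).comp_hasFDerivAt x h1
  have h3 : (fun y : E3 => Real.sqrt (‖y‖ ^ 2)) = fun y : E3 => ‖y‖ := by
    funext y; rw [Real.sqrt_sq (norm_nonneg y)]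
  rw [show ((fun x => Real.sqrt x) ∘ fun y : E3 => ‖y‖ ^ 2) = fun y : E3 => ‖y‖ from h3] at h2
  refine h2.congr_fderiv ?_
  ext y : 1
  rw [Real.sqrt_sq (norm_nonneg x)]
  simp [real_inner_smul_left]
  field_simp

lemma hasGradientAt_comp_norm {x : E3} (hx : x ≠ 0) {g : ℝ → ℝ} {g' : ℝ}
    (hg : HasDerivAt g g' ‖x‖) :
    HasGradientAt (fun y : E3 => g ‖y‖) ((g' * ‖x‖⁻¹) • x) x := by
  have := hg.comp_hasFDerivAt x (hasFDerivAt_norm3 hx)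
  rw [hasGradientAt_iff_hasFDerivAt]
  refine this.congr_fderiv ?_
  ext y : 1
  simp [InnerProductSpace.toDual_apply_apply, real_inner_smul_left, mul_smul]

lemma norm_smul_unit {x : E3} (hx : x ≠ 0) (a : ℝ) : ‖(a * ‖x‖⁻¹) • x‖ = |a| := by
  have hx' : (0:ℝ) < ‖x‖ := norm_pos_iff.mpr hx
  rw [norm_smul]
  simp [abs_mul, abs_inv, abs_of_pos hx', mul_assoc, inv_mul_cancel₀ hx'.ne']

/-- amplitude profile (smooth version) -/
def Am (n : ℕ) (r : ℝ) : ℝ := (n : ℝ) ^ (-(5 : ℝ) / 4) * (1 - Real.cos (r / n))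
/-- radial derivative profile -/
def Dm (n : ℕ) (r : ℝ) : ℝ := (n : ℝ) ^ (-(5 : ℝ) / 4) * Real.sin (r / n) / n

lemma sin_shift (t : ℝ) : Real.sin (t - π/2) + 1 = 1 - Real.cos t := by
  simp [Real.sin_sub]; ring

lemma pex_eq (n : ℕ) (B : ℝ) (x : E3) :
    pex n B x - B = if 2 * n * π ≤ ‖x‖ ∧ ‖x‖ ≤ 4 * n * π then Am n ‖x‖ else 0 := by
  unfold pex Am
  split <;> simp [sin_shift]

lemma hasDerivAt_Am (n : ℕ) (B : ℝ) (r : ℝ) :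
    HasDerivAt (fun t => Am n t + B) (Dm n r) r := by
  have h0 : HasDerivAt (fun t : ℝ => t / n) (1 / n) r := (hasDerivAt_id r).div_const n
  have h1 : HasDerivAt (fun t : ℝ => Real.cos (t / n)) (-Real.sin (r / n) * (1 / n)) r :=
    by have := (Real.hasDerivAt_cos (r / n)).comp r h0; exact this
  have h2 := (((hasDerivAt_const r (1:ℝ)).sub h1).const_mul ((n:ℝ) ^ (-(5:ℝ)/4))).add_const B
  refine h2.congr_deriv ?_
  unfold Dm; ring

lemma hasDerivAt_Am' (n : ℕ) (r : ℝ) : HasDerivAt (Am n) (Dm n r) r := by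
  have := hasDerivAt_Am n 0 r
  simpa using this

lemma grad_pex_eq (n : ℕ) (B : ℝ) {x : E3} (hx : x ≠ 0)
    (h2 : ‖x‖ ≠ 2 * n * π) (h4 : ‖x‖ ≠ 4 * n * π) :
    ‖gradient (pex n B) x‖ ^ 2
      = (if 2 * n * π ≤ ‖x‖ ∧ ‖x‖ ≤ 4 * n * π then Dm n ‖x‖ else 0) ^ 2 := by
  by_cases hcond : 2 * n * π ≤ ‖x‖ ∧ ‖x‖ ≤ 4 * n * π
  · have h2' : 2 * n * π < ‖x‖ := lt_of_le_of_ne hcond.1 (Ne.symm h2)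
    have h4' : ‖x‖ < 4 * n * π := lt_of_le_of_ne hcond.2 h4
    have hopen : IsOpen {y : E3 | 2 * n * π < ‖y‖ ∧ ‖y‖ < 4 * n * π} := by
      have : {y : E3 | 2 * n * π < ‖y‖ ∧ ‖y‖ < 4 * n * π}
          = (fun y : E3 => ‖y‖) ⁻¹' (Set.Ioo (2 * n * π) (4 * n * π)) := rfl
      rw [this]; exact isOpen_Ioo.preimage continuous_norm
    have hev : pex n B =ᶠ[nhds x] fun y => Am n ‖y‖ + B := by
      filter_upwards [hopen.mem_nhds ⟨h2', h4'⟩] with y hy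
      unfold pex Am
      rw [if_pos ⟨hy.1.le, hy.2.le⟩, sin_shift]
    have hgrad : HasGradientAt (fun y : E3 => Am n ‖y‖ + B)
        ((Dm n ‖x‖ * ‖x‖⁻¹) • x) x :=
      hasGradientAt_comp_norm hx (hasDerivAt_Am n B ‖x‖)
    have : gradient (pex n B) x = (Dm n ‖x‖ * ‖x‖⁻¹) • x := by
      unfold gradient
      rw [hev.fderiv_eq]
      rw [hgrad.hasFDerivAt.fderiv]
      simp
    rw [this, if_pos hcond, norm_smul_unit hx, sq_abs]
  · rcases not_and_or.mp hcond with hc | hc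
    · push_neg at hc
      have hopen : IsOpen {y : E3 | ‖y‖ < 2 * n * π} :=
        isOpen_Iio.preimage continuous_norm
      have hev : pex n B =ᶠ[nhds x] fun _ => B := by
        filter_upwards [hopen.mem_nhds hc] with y hy
        unfold pex
        rw [if_neg (by push_neg; intro h; exact absurd h (not_le.mpr hy))]
      have : gradient (pex n B) x = 0 := by
        unfold gradient
        rw [hev.fderiv_eq, fderiv_fun_const]
        simp
      rw [this, if_neg hcond]; simp
    · push_neg at hc
      have hopen : IsOpen {y : E3 | 4 * n * π < ‖y‖} :=
        isOpen_Ioi.preimage continuous_norm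
      have hev : pex n B =ᶠ[nhds x] fun _ => B := by
        filter_upwards [hopen.mem_nhds hc] with y hy
        unfold pex
        rw [if_neg (by push_neg; intro _; exact hy)]
      have : gradient (pex n B) x = 0 := by
        unfold gradient
        rw [hev.fderiv_eq, fderiv_fun_const]
        simp
      rw [this, if_neg hcond]; simp

lemma vex_norm_sq (n : ℕ) (hn : 1 ≤ n) (x : E3) :
    ‖vex n x‖ ^ 2 = (if 2 * n * π ≤ ‖x‖ ∧ ‖x‖ ≤ 4 * n * π then Am n ‖x‖ else 0) ^ 2 := by
  unfold vex
  split_ifs with hcond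
  · have hr : (0:ℝ) < ‖x‖ := by
      have : (0:ℝ) < 2 * n * π := by
        have : (1:ℝ) ≤ n := by exact_mod_cast hn
        positivity
      linarith [hcond.1]
    rw [norm_smul]
    have : Am n ‖x‖ = (n : ℝ) ^ (-(5 : ℝ) / 4) * (Real.sin (‖x‖ / n - π / 2) + 1) := by
      unfold Am; rw [sin_shift]
    rw [this]
    rw [Real.norm_eq_abs, abs_div, abs_of_pos hr, div_mul_cancel₀ _ hr.ne', sq_abs]
  · simp

lemma div3_vex_eq (n : ℕ) (hn : 1 ≤ n) {x : E3} (hx : x ≠ 0)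
    (h2 : ‖x‖ ≠ 2 * n * π) (h4 : ‖x‖ ≠ 4 * n * π) :
    div3 (vex n) x
      = if 2 * n * π ≤ ‖x‖ ∧ ‖x‖ ≤ 4 * n * π then Dm n ‖x‖ + 2 * Am n ‖x‖ / ‖x‖ else 0 := by
  have hr : (0:ℝ) < ‖x‖ := norm_pos_iff.mpr hx
  by_cases hcond : 2 * n * π ≤ ‖x‖ ∧ ‖x‖ ≤ 4 * n * π
  · have h2' : 2 * n * π < ‖x‖ := lt_of_le_of_ne hcond.1 (Ne.symm h2)
    have h4' : ‖x‖ < 4 * n * π := lt_of_le_of_ne hcond.2 h4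
    have hopen : IsOpen {y : E3 | 2 * n * π < ‖y‖ ∧ ‖y‖ < 4 * n * π} := by
      have : {y : E3 | 2 * n * π < ‖y‖ ∧ ‖y‖ < 4 * n * π}
          = (fun y : E3 => ‖y‖) ⁻¹' (Set.Ioo (2 * n * π) (4 * n * π)) := rfl
      rw [this]; exact isOpen_Ioo.preimage continuous_norm
    have hnπ : (0:ℝ) < 2 * n * π := by
      have : (1:ℝ) ≤ n := by exact_mod_cast hn
      positivity
    have hev : ∀ i : Fin 3, (fun y => vex n y i)
        =ᶠ[nhds x] fun y : E3 => (Am n ‖y‖ / ‖y‖) * y i := by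
      intro i
      filter_upwards [hopen.mem_nhds ⟨h2', h4'⟩] with y hy
      have hry : (0:ℝ) < ‖y‖ := lt_trans hnπ hy.1
      unfold vex
      rw [if_pos ⟨hy.1.le, hy.2.le⟩]
      have : Am n ‖y‖ = (n : ℝ) ^ (-(5 : ℝ) / 4) * (Real.sin (‖y‖ / n - π / 2) + 1) := by
        unfold Am; rw [sin_shift]
      rw [this]
      simp [PiLp.smul_apply, smul_eq_mul]
    set r := ‖x‖ with hrdef
    have hsc : HasDerivAt (fun t => Am n t / t) ((Dm n r * r - Am n r * 1) / r ^ 2) r :=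
      (hasDerivAt_Am' n r).div (hasDerivAt_id r) hr.ne'
    have hscF : HasFDerivAt (fun y : E3 => Am n ‖y‖ / ‖y‖)
        (((Dm n r * r - Am n r * 1) / r ^ 2) • innerSL ℝ (r⁻¹ • x)) x :=
      by have := hsc.comp_hasFDerivAt x (hasFDerivAt_norm3 hx); exact this
    have hcomp : ∀ i : Fin 3, HasFDerivAt (fun y : E3 => (Am n ‖y‖ / ‖y‖) * y i)
        ((Am n r / r) • (EuclideanSpace.proj i : E3 →L[ℝ] ℝ)
          + x i • (((Dm n r * r - Am n r * 1) / r ^ 2) • innerSL ℝ (r⁻¹ • x))) x := by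
      intro i
      exact hscF.mul ((EuclideanSpace.proj i : E3 →L[ℝ] ℝ)).hasFDerivAt
    have hfd : ∀ i : Fin 3, fderiv ℝ (fun y => vex n y i) x (EuclideanSpace.single i 1)
        = Am n r / r + x i * (((Dm n r * r - Am n r * 1) / r ^ 2) * (r⁻¹ * x i)) := by
      intro i
      rw [(hev i).fderiv_eq, (hcomp i).fderiv]
      simp only [ContinuousLinearMap.add_apply, ContinuousLinearMap.smul_apply,
        innerSL_apply_apply, EuclideanSpace.inner_single_right, PiLp.smul_apply, smul_eq_mul,
        conj_trivial, smul_eq_mul]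
      have hproj : (EuclideanSpace.proj i : E3 →L[ℝ] ℝ) (EuclideanSpace.single i 1) = 1 := by
        simp [EuclideanSpace.single_apply]
      rw [hproj]
      ring
    unfold div3
    rw [Finset.sum_congr rfl (fun i _ => hfd i)]
    rw [if_pos hcond]
    have hsum : ∑ i : Fin 3, x i * x i = r ^ 2 := by
      have := real_inner_self_eq_norm_sq x
      rw [PiLp.inner_apply] at this
      rw [hrdef]; simpa [sq] using this
    rw [Finset.sum_add_distrib]
    simp only [Finset.sum_const, Finset.card_univ, Fintype.card_fin, nsmul_eq_mul]
    have : ∑ i : Fin 3, x i * ((Dm n r * r - Am n r * 1) / r ^ 2 * (r⁻¹ * x i))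
        = ((Dm n r * r - Am n r * 1) / r ^ 2 * r⁻¹) * ∑ i : Fin 3, x i * x i := by
      rw [Finset.mul_sum]; congr 1; funext i; ring
    rw [this, hsum]
    field_simp
    ring
  · rcases not_and_or.mp hcond with hc | hc
    · push_neg at hc
      have hopen : IsOpen {y : E3 | ‖y‖ < 2 * n * π} := isOpen_Iio.preimage continuous_norm
      have hev : ∀ i : Fin 3, (fun y => vex n y i) =ᶠ[nhds x] fun _ : E3 => (0:ℝ) := by
        intro i
        filter_upwards [hopen.mem_nhds hc] with y hy
        unfold vex
        rw [if_neg (by push_neg; intro h; exact absurd h (not_le.mpr hy))]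
        rfl
      unfold div3
      rw [if_neg hcond]
      rw [Finset.sum_congr rfl (fun i _ => by rw [(hev i).fderiv_eq, fderiv_fun_const])]
      simp
    · push_neg at hc
      have hopen : IsOpen {y : E3 | 4 * n * π < ‖y‖} := isOpen_Ioi.preimage continuous_norm
      have hev : ∀ i : Fin 3, (fun y => vex n y i) =ᶠ[nhds x] fun _ : E3 => (0:ℝ) := by
        intro i
        filter_upwards [hopen.mem_nhds hc] with y hy
        unfold vex
        rw [if_neg (by push_neg; intro _; exact hy)]
        rfl
      unfold div3
      rw [if_neg hcond]
      rw [Finset.sum_congr rfl (fun i _ => by rw [(hev i).fderiv_eq, fderiv_fun_const])]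
      simp

/-! ### Radial integration -/

lemma radial_integral (f : ℝ → ℝ) :
    ∫ x : E3, f ‖x‖ = (3 * (volume (Metric.ball (0:E3) 1)).toReal)
      * ∫ r in Set.Ioi (0:ℝ), r ^ 2 * f r := by
  have h := MeasureTheory.integral_fun_norm_addHaar (volume : Measure E3) f
  rw [finrank_euclideanSpace_fin] at h
  simpa [smul_eq_mul, mul_assoc, mul_comm, mul_left_comm, measureReal_def] using h

lemma integral_radial_if (n : ℕ) (hn : 1 ≤ n) (core : ℝ → ℝ) (h0 : core (2*n*π) = 0) :
    ∫ x : E3, (if 2*n*π ≤ ‖x‖ ∧ ‖x‖ ≤ 4*n*π then core ‖x‖ else 0)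
      = (3 * (volume (Metric.ball (0:E3) 1)).toReal)
        * ∫ r in Set.Ioc (2*n*π) (4*n*π), r^2 * core r := by
  have hnπ : (0:ℝ) < 2 * n * π := by
    have : (1:ℝ) ≤ n := by exact_mod_cast hn
    positivity
  have key : (fun r : ℝ => r^2 * (if 2*n*π ≤ r ∧ r ≤ 4*n*π then core r else 0))
      = (Set.Ioc (2*n*π) (4*n*π)).indicator (fun r => r^2 * core r) := by
    funext r
    by_cases hc : 2*n*π ≤ r ∧ r ≤ 4*n*π
    · rcases eq_or_lt_of_le hc.1 with he | hlt
      · rw [if_pos hc, Set.indicator_of_notMem (by simp [← he]), ← he, h0, mul_zero]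
      · rw [if_pos hc, Set.indicator_of_mem (Set.mem_Ioc.mpr ⟨hlt, hc.2⟩)]
    · rw [if_neg hc, Set.indicator_of_notMem (fun hm => hc ⟨hm.1.le, hm.2⟩), mul_zero]
  rw [radial_integral (fun r => if 2*n*π ≤ r ∧ r ≤ 4*n*π then core r else 0)]
  congr 1
  rw [show (fun r : ℝ => r^2 * (if 2*n*π ≤ r ∧ r ≤ 4*n*π then core r else 0))
      = (Set.Ioc (2*n*π) (4*n*π)).indicator (fun r => r^2 * core r) from key]
  rw [setIntegral_indicator measurableSet_Ioc]
  have hss : Set.Ioi (0:ℝ) ∩ Set.Ioc (2*n*π) (4*n*π) = Set.Ioc (2*n*π) (4*n*π) :=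
    Set.inter_eq_self_of_subset_right (fun r hr => Set.mem_Ioi.mpr (lt_trans hnπ hr.1))
  rw [hss]

lemma upper_help {a b M : ℝ} (hab : a ≤ b) {F : ℝ → ℝ}
    (hF : ∀ r ∈ Set.Ioc a b, |F r| ≤ M) :
    ∫ r in Set.Ioc a b, F r ≤ M * (b - a) := by
  calc ∫ r in Set.Ioc a b, F r ≤ |∫ r in Set.Ioc a b, F r| := le_abs_self _
    _ ≤ M * (volume (Set.Ioc a b)).toReal := by
        simpa [Real.norm_eq_abs, ENNReal.toReal_ofReal'] using
          norm_setIntegral_le_of_norm_le_const (μ := volume) (f := F)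
            measure_Ioc_lt_top
            (fun r hr => by simpa [Real.norm_eq_abs] using hF r hr)
    _ = M * (b - a) := by rw [Real.volume_Ioc, ENNReal.toReal_ofReal (by linarith)]

lemma lower_help {a b a' b' m : ℝ} {F : ℝ → ℝ} (ha : a ≤ a') (hb : b' ≤ b) (hab' : a' ≤ b')
    (hFc : ContinuousOn F (Set.Icc a b)) (hF0 : ∀ r, 0 ≤ F r)
    (hm : ∀ r ∈ Set.Ioc a' b', m ≤ F r) :
    m * (b' - a') ≤ ∫ r in Set.Ioc a b, F r := by
  have hii : IntegrableOn F (Set.Icc a b) := hFc.integrableOn_Icc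
  have hi : IntegrableOn F (Set.Ioc a b) := hii.mono_set Set.Ioc_subset_Icc_self
  have hi' : IntegrableOn F (Set.Ioc a' b') := hi.mono_set (Set.Ioc_subset_Ioc ha hb)
  have step1 : ∫ r in Set.Ioc a' b', F r ≤ ∫ r in Set.Ioc a b, F r :=
    setIntegral_mono_set hi (Eventually.of_forall hF0)
      (HasSubset.Subset.eventuallyLE (Set.Ioc_subset_Ioc ha hb))
  have step2 : m * (b' - a') ≤ ∫ r in Set.Ioc a' b', F r := by
    have := setIntegral_ge_of_const_le (μ := volume) measurableSet_Ioc
      (measure_Ioc_lt_top).ne hm hi'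
    rw [smul_eq_mul, mul_comm, measureReal_def] at this
    rwa [Real.volume_Ioc, ENNReal.toReal_ofReal (by linarith)] at this
  linarith

/-! ### Quantitative bounds on the one-dimensional integrals -/

lemma nu_pos {n : ℕ} (hn : 1 ≤ n) : (0:ℝ) < (n:ℝ) := by
  exact_mod_cast Nat.pos_of_ne_zero (by omega)

lemma P_nonneg (n : ℕ) : 0 ≤ (n:ℝ) ^ (-(5:ℝ)/4) := Real.rpow_nonneg (Nat.cast_nonneg n) _

lemma P_sq {n : ℕ} (hn : 1 ≤ n) : ((n:ℝ) ^ (-(5:ℝ)/4)) ^ 2 = (n:ℝ) ^ (-(5:ℝ)/2) := by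
  rw [← Real.rpow_natCast ((n:ℝ) ^ (-(5:ℝ)/4)) 2, ← Real.rpow_mul (nu_pos hn).le]
  norm_num

lemma nu_half {n : ℕ} (hn : 1 ≤ n) :
    (n:ℝ) ^ ((1:ℝ)/2) = (n:ℝ) ^ (-(5:ℝ)/2) * (n:ℝ)^(3:ℕ) := by
  rw [← Real.rpow_natCast (n:ℝ) 3, ← Real.rpow_add (nu_pos hn)]
  norm_num

lemma nu_m32 {n : ℕ} (hn : 1 ≤ n) :
    (n:ℝ) ^ (-(3:ℝ)/2) = (n:ℝ) ^ (-(5:ℝ)/2) * (n:ℝ) := by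
  rw [show (-(3:ℝ)/2) = (-(5:ℝ)/2) + 1 by norm_num, Real.rpow_add (nu_pos hn), Real.rpow_one]

lemma Am_nonneg (n : ℕ) (r : ℝ) : 0 ≤ Am n r := by
  unfold Am
  have := Real.cos_le_one (r / n)
  have := P_nonneg n
  nlinarith

lemma Am_le (n : ℕ) (r : ℝ) : Am n r ≤ 2 * (n:ℝ) ^ (-(5:ℝ)/4) := by
  unfold Am
  have := Real.neg_one_le_cos (r / n)
  have := P_nonneg n
  nlinarith

lemma Dm_abs_le {n : ℕ} (hn : 1 ≤ n) (r : ℝ) : |Dm n r| ≤ (n:ℝ) ^ (-(5:ℝ)/4) / n := by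
  unfold Dm
  rw [abs_div, abs_mul, abs_of_nonneg (P_nonneg n), abs_of_pos (nu_pos hn)]
  calc (n:ℝ) ^ (-(5:ℝ)/4) * |Real.sin (r / n)| / n
      ≤ (n:ℝ) ^ (-(5:ℝ)/4) * 1 / n := by
        gcongr
        · exact abs_le.mpr ⟨Real.neg_one_le_sin _, Real.sin_le_one _⟩
    _ = (n:ℝ) ^ (-(5:ℝ)/4) / n := by ring

lemma Am_endpoint {n : ℕ} (hn : 1 ≤ n) : Am n (2*n*π) = 0 := by
  unfold Am
  rw [show (2*(n:ℝ)*π)/n = 2*π by field_simp [(nu_pos hn).ne'], Real.cos_two_pi]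
  ring

lemma Dm_endpoint {n : ℕ} (hn : 1 ≤ n) : Dm n (2*n*π) = 0 := by
  unfold Dm
  rw [show (2*(n:ℝ)*π)/n = 2*π by field_simp [(nu_pos hn).ne'], Real.sin_two_pi]
  ring

lemma JP_upper {n : ℕ} (hn : 1 ≤ n) :
    ∫ r in Set.Ioc (2*n*π) (4*n*π), r^2 * (Am n r)^2 ≤ 128*π^3 * (n:ℝ)^((1:ℝ)/2) := by
  set ν := (n:ℝ)
  set P := (n:ℝ) ^ (-(5:ℝ)/4) with hP
  have hν := nu_pos hn
  have hab : 2*ν*π ≤ 4*ν*π := by nlinarith [pi_pos]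
  have hb : ∀ r ∈ Set.Ioc (2*ν*π) (4*ν*π), |r^2 * (Am n r)^2| ≤ (4*ν*π)^2 * (2*P)^2 := by
    intro r hr
    have hr0 : 0 < r := lt_trans (by nlinarith [pi_pos]) hr.1
    rw [abs_of_nonneg (by positivity)]
    have h1 : r^2 ≤ (4*ν*π)^2 := by nlinarith [hr.2]
    have h2 : (Am n r)^2 ≤ (2*P)^2 := by
      have := Am_nonneg n r; have := Am_le n r; nlinarith
    nlinarith [sq_nonneg (Am n r), sq_nonneg r]
  calc ∫ r in Set.Ioc (2*ν*π) (4*ν*π), r^2 * (Am n r)^2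
      ≤ ((4*ν*π)^2 * (2*P)^2) * ((4*ν*π) - (2*ν*π)) := upper_help hab hb
    _ = 128*π^3 * (P^2 * ν^(3:ℕ)) := by ring
    _ = 128*π^3 * (n:ℝ)^((1:ℝ)/2) := by rw [P_sq hn, ← nu_half hn]

lemma JP_lower {n : ℕ} (hn : 1 ≤ n) :
    π^3/2 * (n:ℝ)^((1:ℝ)/2) ≤ ∫ r in Set.Ioc (2*n*π) (4*n*π), r^2 * (Am n r)^2 := by
  set ν := (n:ℝ) with hνdef
  set P := (n:ℝ) ^ (-(5:ℝ)/4) with hP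
  have hν := nu_pos hn
  have hπ := pi_pos
  have hcont : ContinuousOn (fun r => r^2 * (Am n r)^2) (Set.Icc (2*ν*π) (4*ν*π)) := by
    apply Continuous.continuousOn
    unfold Am
    fun_prop
  have hm : ∀ r ∈ Set.Ioc (5*ν*π/2) (7*ν*π/2), 4*π^2*ν^2*P^2 ≤ r^2 * (Am n r)^2 := by
    intro r hr
    have ht1 : 5*π/2 < r/ν := by rw [lt_div_iff₀ hν]; nlinarith [hr.1]
    have ht2 : r/ν ≤ 7*π/2 := by rw [div_le_iff₀ hν]; nlinarith [hr.2]
    have hcos : Real.cos (r/ν) ≤ 0 := by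
      rw [← Real.cos_sub_two_pi]
      exact Real.cos_nonpos_of_pi_div_two_le_of_le (by linarith) (by linarith)
    have hA : P ≤ Am n r := by
      unfold Am
      rw [← hP, ← hνdef]
      nlinarith [P_nonneg n]
    have hr0' : 2*ν*π < r := by nlinarith [hr.1]
    have hr2 : (2*ν*π)^2 ≤ r^2 := by
      nlinarith [mul_pos (sub_pos.mpr hr0') (show (0:ℝ) < r + 2*ν*π by nlinarith)]
    have hA2 : P^2 ≤ (Am n r)^2 := by nlinarith [P_nonneg n]
    nlinarith [sq_nonneg P, Am_nonneg n r, sq_nonneg (Am n r)]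
  have := lower_help (by nlinarith) (by nlinarith) (by nlinarith) hcont
    (fun r => by positivity) hm
  calc π^3/2 * ν^((1:ℝ)/2)
      = π^3/2 * ((n:ℝ)^(-(5:ℝ)/2) * ν^(3:ℕ)) := by rw [nu_half hn]
    _ ≤ 4*π^3 * ((n:ℝ)^(-(5:ℝ)/2) * ν^(3:ℕ)) := by
        have h1 : (0:ℝ) ≤ (n:ℝ)^(-(5:ℝ)/2) * ν^(3:ℕ) :=
          mul_nonneg (Real.rpow_nonneg hν.le _) (pow_nonneg hν.le 3)
        nlinarith [pow_pos hπ 3]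
    _ = 4*π^2*ν^2*P^2 * (7*ν*π/2 - 5*ν*π/2) := by rw [hP, P_sq hn]; ring
    _ ≤ _ := this

lemma JG_upper {n : ℕ} (hn : 1 ≤ n) :
    ∫ r in Set.Ioc (2*n*π) (4*n*π), r^2 * (Dm n r)^2 ≤ 128*π^3 * (n:ℝ)^(-(3:ℝ)/2) := by
  set ν := (n:ℝ)
  set P := (n:ℝ) ^ (-(5:ℝ)/4) with hP
  have hν := nu_pos hn
  have hπ := pi_pos
  have hab : 2*ν*π ≤ 4*ν*π := by nlinarith
  have hb : ∀ r ∈ Set.Ioc (2*ν*π) (4*ν*π), |r^2 * (Dm n r)^2| ≤ (4*ν*π)^2 * (P/ν)^2 := by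
    intro r hr
    rw [abs_of_nonneg (by positivity)]
    have h1 : r^2 ≤ (4*ν*π)^2 := by nlinarith [hr.1, hr.2]
    have h2 : (Dm n r)^2 ≤ (P/ν)^2 := by
      rw [← sq_abs (Dm n r)]
      exact pow_le_pow_left₀ (abs_nonneg _) (Dm_abs_le hn r) 2
    exact mul_le_mul h1 h2 (sq_nonneg _) (by positivity)
  calc ∫ r in Set.Ioc (2*ν*π) (4*ν*π), r^2 * (Dm n r)^2
      ≤ ((4*ν*π)^2 * (P/ν)^2) * ((4*ν*π) - (2*ν*π)) := upper_help hab hb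
    _ = 32*π^3 * (ν * P^2) := by field_simp; ring
    _ ≤ 128*π^3 * (ν * P^2) := by nlinarith [mul_nonneg hν.le (sq_nonneg P), pow_pos hπ 3]
    _ = 128*π^3 * (n:ℝ)^(-(3:ℝ)/2) := by
        rw [nu_m32 hn, hP, P_sq hn]; ring

lemma JG_lower {n : ℕ} (hn : 1 ≤ n) :
    π^3/2 * (n:ℝ)^(-(3:ℝ)/2) ≤ ∫ r in Set.Ioc (2*n*π) (4*n*π), r^2 * (Dm n r)^2 := by
  set ν := (n:ℝ) with hνdef
  set P := (n:ℝ) ^ (-(5:ℝ)/4) with hP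
  have hν := nu_pos hn
  have hπ := pi_pos
  have hsqrt2 : (Real.sqrt 2)^2 = 2 := Real.sq_sqrt (by norm_num)
  have hcont : ContinuousOn (fun r => r^2 * (Dm n r)^2) (Set.Icc (2*ν*π) (4*ν*π)) := by
    apply Continuous.continuousOn
    unfold Dm
    fun_prop
  have hm : ∀ r ∈ Set.Ioc (9*ν*π/4) (5*ν*π/2), 2*π^2*P^2 ≤ r^2 * (Dm n r)^2 := by
    intro r hr
    have ht1 : 9*π/4 < r/ν := by rw [lt_div_iff₀ hν]; nlinarith [hr.1]
    have ht2 : r/ν ≤ 5*π/2 := by rw [div_le_iff₀ hν]; nlinarith [hr.2]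
    have hmem1 : π/4 ∈ Set.Icc (-(π/2)) (π/2) := ⟨by linarith, by linarith⟩
    have hmem2 : r/ν - 2*π ∈ Set.Icc (-(π/2)) (π/2) := ⟨by linarith, by linarith⟩
    have hsin : Real.sqrt 2 / 2 ≤ Real.sin (r/ν) := by
      rw [← Real.sin_sub_two_pi, ← Real.sin_pi_div_four]
      exact Real.strictMonoOn_sin.monotoneOn hmem1 hmem2 (by linarith)
    have hDm : P * (Real.sqrt 2/2) / ν ≤ Dm n r := by
      unfold Dm
      rw [← hP, ← hνdef]
      gcongr
    have hD2 : (P * (Real.sqrt 2/2) / ν)^2 ≤ (Dm n r)^2 :=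
      pow_le_pow_left₀ (by positivity) hDm 2
    have he : (P * (Real.sqrt 2/2) / ν)^2 = P^2/(2*ν^2) := by
      rw [div_pow, mul_pow, div_pow, hsqrt2]
      field_simp
    have hr0' : 2*ν*π < r := by nlinarith [hr.1]
    have hr2 : (2*ν*π)^2 ≤ r^2 := by
      nlinarith [mul_pos (sub_pos.mpr hr0') (show (0:ℝ) < r + 2*ν*π by nlinarith)]
    have key : (2*ν*π)^2 * (P^2/(2*ν^2)) = 2*π^2*P^2 := by
      field_simp
      rw [hνdef]; field_simp
    calc 2*π^2*P^2 = (2*ν*π)^2 * (P^2/(2*ν^2)) := key.symm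
      _ ≤ r^2 * (Dm n r)^2 := by
          rw [← he]
          exact mul_le_mul hr2 hD2 (by positivity) (sq_nonneg r)
  have := lower_help (by nlinarith) (by nlinarith) (by nlinarith) hcont
    (fun r => by positivity) hm
  calc π^3/2 * ν^(-(3:ℝ)/2)
      = π^3/2 * ((n:ℝ)^(-(5:ℝ)/2) * ν) := by rw [nu_m32 hn]
    _ = 2*π^2*P^2 * (5*ν*π/2 - 9*ν*π/4) := by rw [hP, P_sq hn]; ring
    _ ≤ _ := this

lemma JD_upper {n : ℕ} (hn : 1 ≤ n) :
    ∫ r in Set.Ioc (2*n*π) (4*n*π), r^2 * (Dm n r + 2 * Am n r / r)^2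
      ≤ 128*π^3 * (n:ℝ)^(-(3:ℝ)/2) := by
  set ν := (n:ℝ) with hνdef
  set P := (n:ℝ) ^ (-(5:ℝ)/4) with hP
  have hν := nu_pos hn
  have hπ := pi_pos
  have hab : 2*ν*π ≤ 4*ν*π := by nlinarith
  have hb : ∀ r ∈ Set.Ioc (2*ν*π) (4*ν*π),
      |r^2 * (Dm n r + 2 * Am n r / r)^2| ≤ (4*ν*π)^2 * (2*P/ν)^2 := by
    intro r hr
    have hr0 : (0:ℝ) < r := lt_trans (by nlinarith) hr.1
    rw [abs_of_nonneg (by positivity)]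
    have h1 : r^2 ≤ (4*ν*π)^2 := by nlinarith [hr.1, hr.2]
    have hDmb : |Dm n r| ≤ P/ν := Dm_abs_le hn r
    have hAmb : |2 * Am n r / r| ≤ P/ν := by
      rw [abs_of_nonneg (div_nonneg (by nlinarith [Am_nonneg n r]) hr0.le)]
      have step1 : 2 * Am n r / r ≤ 4*P/(2*ν*π) := by
        apply div_le_div₀ (by positivity) ?_ (by positivity) hr.1.le
        nlinarith [Am_le n r]
      have step2 : 4*P/(2*ν*π) ≤ P/ν := by
        rw [div_le_div_iff₀ (by positivity) hν]
        nlinarith [mul_nonneg (mul_nonneg (P_nonneg n) (nu_pos hn).le)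
          (sub_nonneg.mpr Real.two_le_pi)]
      linarith
    have habs : |Dm n r + 2 * Am n r / r| ≤ 2*P/ν := by
      calc |Dm n r + 2 * Am n r / r| ≤ |Dm n r| + |2 * Am n r / r| := abs_add_le _ _
        _ ≤ P/ν + P/ν := add_le_add hDmb hAmb
        _ = 2*P/ν := by ring
    have h2 : (Dm n r + 2 * Am n r / r)^2 ≤ (2*P/ν)^2 := by
      rw [← sq_abs (Dm n r + 2 * Am n r / r)]
      exact pow_le_pow_left₀ (abs_nonneg _) habs 2
    exact mul_le_mul h1 h2 (sq_nonneg _) (by positivity)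
  calc ∫ r in Set.Ioc (2*ν*π) (4*ν*π), r^2 * (Dm n r + 2 * Am n r / r)^2
      ≤ ((4*ν*π)^2 * (2*P/ν)^2) * ((4*ν*π) - (2*ν*π)) := upper_help hab hb
    _ = 128*π^3 * (ν * P^2) := by field_simp; ring
    _ = 128*π^3 * (n:ℝ)^(-(3:ℝ)/2) := by rw [nu_m32 hn, hP, P_sq hn]; ring

/-! ### Almost-everywhere regular points -/

lemma ae_good (n : ℕ) :
    ∀ᵐ x : E3, x ≠ 0 ∧ ‖x‖ ≠ 2*n*π ∧ ‖x‖ ≠ 4*n*π := by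
  have key : ∀ a : ℝ, ∀ᵐ x : E3, ‖x‖ ≠ a := by
    intro a
    rw [ae_iff]
    have hset : {x : E3 | ¬ ‖x‖ ≠ a} = Metric.sphere (0:E3) a := by
      ext x; simp [mem_sphere_zero_iff_norm]
    rw [hset]
    exact MeasureTheory.Measure.addHaar_sphere volume 0 a
  have key0 : ∀ᵐ x : E3, x ≠ 0 := by
    filter_upwards [key 0] with x hx
    intro h; rw [h] at hx; simp at hx
  filter_upwards [key0, key (2*n*π), key (4*n*π)] with x h0 h2 h4
  exact ⟨h0, h2, h4⟩

/-! ### The four integral identities -/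

lemma IP_eq (n : ℕ) (hn : 1 ≤ n) (B : ℝ) :
    ∫ x : E3, (pex n B x - B)^2
      = (3 * (volume (Metric.ball (0:E3) 1)).toReal)
        * ∫ r in Set.Ioc (2*n*π) (4*n*π), r^2 * (Am n r)^2 := by
  calc ∫ x : E3, (pex n B x - B)^2
      = ∫ x : E3, (if 2*n*π ≤ ‖x‖ ∧ ‖x‖ ≤ 4*n*π then (Am n ‖x‖)^2 else 0) := by
        congr 1; funext x; rw [pex_eq]; split_ifs <;> simp
    _ = _ := integral_radial_if n hn (fun r => (Am n r)^2) (by simp [Am_endpoint hn])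

lemma IV_eq (n : ℕ) (hn : 1 ≤ n) :
    ∫ x : E3, ‖vex n x‖^2
      = (3 * (volume (Metric.ball (0:E3) 1)).toReal)
        * ∫ r in Set.Ioc (2*n*π) (4*n*π), r^2 * (Am n r)^2 := by
  calc ∫ x : E3, ‖vex n x‖^2
      = ∫ x : E3, (if 2*n*π ≤ ‖x‖ ∧ ‖x‖ ≤ 4*n*π then (Am n ‖x‖)^2 else 0) := by
        congr 1; funext x; rw [vex_norm_sq n hn]; split_ifs <;> simp
    _ = _ := integral_radial_if n hn (fun r => (Am n r)^2) (by simp [Am_endpoint hn])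

lemma IG_eq (n : ℕ) (hn : 1 ≤ n) (B : ℝ) :
    ∫ x : E3, ‖gradient (pex n B) x‖^2
      = (3 * (volume (Metric.ball (0:E3) 1)).toReal)
        * ∫ r in Set.Ioc (2*n*π) (4*n*π), r^2 * (Dm n r)^2 := by
  calc ∫ x : E3, ‖gradient (pex n B) x‖^2
      = ∫ x : E3, (if 2*n*π ≤ ‖x‖ ∧ ‖x‖ ≤ 4*n*π then (Dm n ‖x‖)^2 else 0) := by
        apply integral_congr_ae
        filter_upwards [ae_good n] with x hx
        rw [grad_pex_eq n B hx.1 hx.2.1 hx.2.2]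
        split_ifs <;> simp
    _ = _ := integral_radial_if n hn (fun r => (Dm n r)^2) (by simp [Dm_endpoint hn])

lemma ID_eq (n : ℕ) (hn : 1 ≤ n) :
    ∫ x : E3, (div3 (vex n) x)^2
      = (3 * (volume (Metric.ball (0:E3) 1)).toReal)
        * ∫ r in Set.Ioc (2*n*π) (4*n*π), r^2 * (Dm n r + 2 * Am n r / r)^2 := by
  calc ∫ x : E3, (div3 (vex n) x)^2
      = ∫ x : E3, (if 2*n*π ≤ ‖x‖ ∧ ‖x‖ ≤ 4*n*π then (Dm n ‖x‖ + 2 * Am n ‖x‖ / ‖x‖)^2 else 0) := by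
        apply integral_congr_ae
        filter_upwards [ae_good n] with x hx
        rw [div3_vex_eq n hn hx.1 hx.2.1 hx.2.2]
        split_ifs <;> simp
    _ = _ := integral_radial_if n hn (fun r => (Dm n r + 2 * Am n r / r)^2)
        (by simp [Am_endpoint hn, Dm_endpoint hn])

set_option maxHeartbeats 1000000 in
/-- scaling of the 3D example data. There are constants `0 < c < C`,
independent of `n`, such that `c n^{1/2} ≤ ‖p₀ − B‖²_{L²} ≤ C n^{1/2}` and
`c n^{−3/2} ≤ ‖∇p₀‖²_{L²} ≤ C n^{−3/2}`; consequently, with `N₁` and `κ` as in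
Theorem 1.1, `N₁κ → 0` as `n → ∞` while `‖p₀ − B‖²_{L²} → ∞`. -/
theorem stmt18 (B : ℝ) (hB : 0 < B) :
    (∃ c C : ℝ, 0 < c ∧ c < C ∧ ∀ n : ℕ, 1 ≤ n →
        (c * (n : ℝ) ^ ((1 : ℝ) / 2) ≤ ∫ x, (pex n B x - B) ^ 2)
        ∧ ((∫ x, (pex n B x - B) ^ 2) ≤ C * (n : ℝ) ^ ((1 : ℝ) / 2))
        ∧ (c * (n : ℝ) ^ (-(3 : ℝ) / 2) ≤ ∫ x, ‖gradient (pex n B) x‖ ^ 2)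
        ∧ ((∫ x, ‖gradient (pex n B) x‖ ^ 2) ≤ C * (n : ℝ) ^ (-(3 : ℝ) / 2)))
    ∧ Tendsto (fun n : ℕ =>
        ((1 + 1 / B) * ((∫ x, (pex n B x - B) ^ 2) + B * ∫ x, ‖vex n x‖ ^ 2) + 1)
          * (2 * (1 + 1 / B) * ((∫ x, ‖gradient (pex n B) x‖ ^ 2)
              + B * ∫ x, (div3 (vex n) x) ^ 2)))
        atTop (nhds 0)
    ∧ Tendsto (fun n : ℕ => ∫ x, (pex n B x - B) ^ 2) atTop atTop := by
  have hπ := pi_pos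
  set σ := 3 * (volume (Metric.ball (0:E3) 1)).toReal with hσdef
  have hσ : 0 < σ := by
    have h1 : volume (Metric.ball (0:E3) 1) ≠ 0 :=
      (Metric.measure_ball_pos volume (0:E3) one_pos).ne'
    have h2 : volume (Metric.ball (0:E3) 1) ≠ ⊤ := measure_ball_lt_top.ne
    have := ENNReal.toReal_pos h1 h2
    rw [hσdef]; linarith
  set c := σ * (π^3/2) with hcdef
  set C := σ * (128*π^3) with hCdef
  have hc : 0 < c := by rw [hcdef]; positivity
  have hcC : c < C := by
    rw [hcdef, hCdef]
    have h3 : (0:ℝ) < π^3 := pow_pos hπ 3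
    nlinarith
  have hCpos : 0 < C := lt_trans hc hcC
  have main : ∀ n : ℕ, 1 ≤ n →
      (c * (n : ℝ) ^ ((1 : ℝ) / 2) ≤ ∫ x, (pex n B x - B) ^ 2)
      ∧ ((∫ x, (pex n B x - B) ^ 2) ≤ C * (n : ℝ) ^ ((1 : ℝ) / 2))
      ∧ (c * (n : ℝ) ^ (-(3 : ℝ) / 2) ≤ ∫ x, ‖gradient (pex n B) x‖ ^ 2)
      ∧ ((∫ x, ‖gradient (pex n B) x‖ ^ 2) ≤ C * (n : ℝ) ^ (-(3 : ℝ) / 2)) := by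
    intro n hn
    refine ⟨?_, ?_, ?_, ?_⟩
    · rw [IP_eq n hn B, ← hσdef]
      calc c * (n:ℝ)^((1:ℝ)/2) = σ * (π^3/2 * (n:ℝ)^((1:ℝ)/2)) := by rw [hcdef]; ring
        _ ≤ σ * ∫ r in Set.Ioc (2*n*π) (4*n*π), r^2 * (Am n r)^2 :=
            mul_le_mul_of_nonneg_left (JP_lower hn) hσ.le
    · rw [IP_eq n hn B, ← hσdef]
      calc σ * ∫ r in Set.Ioc (2*n*π) (4*n*π), r^2 * (Am n r)^2
          ≤ σ * (128*π^3 * (n:ℝ)^((1:ℝ)/2)) := mul_le_mul_of_nonneg_left (JP_upper hn) hσ.le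
        _ = C * (n:ℝ)^((1:ℝ)/2) := by rw [hCdef]; ring
    · rw [IG_eq n hn B, ← hσdef]
      calc c * (n:ℝ)^(-(3:ℝ)/2) = σ * (π^3/2 * (n:ℝ)^(-(3:ℝ)/2)) := by rw [hcdef]; ring
        _ ≤ σ * ∫ r in Set.Ioc (2*n*π) (4*n*π), r^2 * (Dm n r)^2 :=
            mul_le_mul_of_nonneg_left (JG_lower hn) hσ.le
    · rw [IG_eq n hn B, ← hσdef]
      calc σ * ∫ r in Set.Ioc (2*n*π) (4*n*π), r^2 * (Dm n r)^2
          ≤ σ * (128*π^3 * (n:ℝ)^(-(3:ℝ)/2)) := mul_le_mul_of_nonneg_left (JG_upper hn) hσ.le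
        _ = C * (n:ℝ)^(-(3:ℝ)/2) := by rw [hCdef]; ring
  have hB1 : (0:ℝ) < 1 + 1/B := by positivity
  refine ⟨⟨c, C, hc, hcC, main⟩, ?_, ?_⟩
  · -- the product tends to 0
    set C1 := (1+1/B)*(1+B)*C with hC1
    set C2 := 2*(1+1/B)*(1+B)*C with hC2
    have hC1pos : 0 < C1 := by rw [hC1]; positivity
    have hC2pos : 0 < C2 := by rw [hC2]; positivity
    apply squeeze_zero'
      (g := fun n : ℕ => C1*C2 * (n:ℝ)^(-(1:ℝ)) + C2 * (n:ℝ)^(-(3:ℝ)/2))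
    · apply Eventually.of_forall
      intro n
      have i1 : 0 ≤ ∫ x, (pex n B x - B)^2 := integral_nonneg fun x => sq_nonneg _
      have i2 : 0 ≤ ∫ x, ‖vex n x‖^2 := integral_nonneg fun x => sq_nonneg _
      have i3 : 0 ≤ ∫ x, ‖gradient (pex n B) x‖^2 := integral_nonneg fun x => sq_nonneg _
      have i4 : 0 ≤ ∫ x, (div3 (vex n) x)^2 := integral_nonneg fun x => sq_nonneg _
      have hA1 : 0 ≤ (1 + 1/B) * ((∫ x, (pex n B x - B)^2) + B * ∫ x, ‖vex n x‖^2) + 1 :=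
        add_nonneg (mul_nonneg hB1.le (add_nonneg i1 (mul_nonneg hB.le i2))) zero_le_one
      have hA2 : 0 ≤ 2 * (1 + 1/B) * ((∫ x, ‖gradient (pex n B) x‖^2)
          + B * ∫ x, (div3 (vex n) x)^2) :=
        mul_nonneg (by positivity) (add_nonneg i3 (mul_nonneg hB.le i4))
      exact mul_nonneg hA1 hA2
    · rw [eventually_atTop]
      refine ⟨1, fun n hn => ?_⟩
      have hν := nu_pos hn
      set IPn := ∫ x, (pex n B x - B)^2 with hIPdef
      set IVn := ∫ x, ‖vex n x‖^2 with hIVdef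
      set IGn := ∫ x, ‖gradient (pex n B) x‖^2 with hIGdef
      set IDn := ∫ x, (div3 (vex n) x)^2 with hIDdef
      have i1 : 0 ≤ IPn := integral_nonneg fun x => sq_nonneg _
      have i3 : 0 ≤ IGn := integral_nonneg fun x => sq_nonneg _
      have i4 : 0 ≤ IDn := integral_nonneg fun x => sq_nonneg _
      have i2eq : IVn = IPn := by
        rw [hIVdef, hIPdef, IV_eq n hn, IP_eq n hn B]
      have h1 : IPn ≤ C * (n:ℝ)^((1:ℝ)/2) := (main n hn).2.1
      have h3 : IGn ≤ C * (n:ℝ)^(-(3:ℝ)/2) := (main n hn).2.2.2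
      have h4 : IDn ≤ C * (n:ℝ)^(-(3:ℝ)/2) := by
        rw [hIDdef, ID_eq n hn, ← hσdef]
        calc σ * ∫ r in Set.Ioc (2*n*π) (4*n*π), r^2 * (Dm n r + 2*Am n r/r)^2
            ≤ σ * (128*π^3 * (n:ℝ)^(-(3:ℝ)/2)) := mul_le_mul_of_nonneg_left (JD_upper hn) hσ.le
          _ = C * (n:ℝ)^(-(3:ℝ)/2) := by rw [hCdef]; ring
      have hrp1 : 0 ≤ (n:ℝ)^((1:ℝ)/2) := Real.rpow_nonneg hν.le _
      have hrp2 : 0 ≤ (n:ℝ)^(-(3:ℝ)/2) := Real.rpow_nonneg hν.le _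
      have hA1 : (1 + 1/B) * (IPn + B * IVn) + 1 ≤ C1 * (n:ℝ)^((1:ℝ)/2) + 1 := by
        have hsum : IPn + B * IVn ≤ (1+B) * (C * (n:ℝ)^((1:ℝ)/2)) := by
          rw [i2eq]; nlinarith
        have := mul_le_mul_of_nonneg_left hsum hB1.le
        rw [hC1]; nlinarith
      have hA2 : 2 * (1 + 1/B) * (IGn + B * IDn) ≤ C2 * (n:ℝ)^(-(3:ℝ)/2) := by
        have hsum : IGn + B * IDn ≤ (1+B) * (C * (n:ℝ)^(-(3:ℝ)/2)) := by nlinarith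
        have := mul_le_mul_of_nonneg_left hsum (by positivity : (0:ℝ) ≤ 2 * (1 + 1/B))
        rw [hC2]; nlinarith
      have hA2nn : 0 ≤ 2 * (1 + 1/B) * (IGn + B * IDn) :=
        mul_nonneg (by positivity) (add_nonneg i3 (mul_nonneg hB.le i4))
      calc ((1 + 1/B) * (IPn + B * IVn) + 1) * (2 * (1 + 1/B) * (IGn + B * IDn))
          ≤ (C1 * (n:ℝ)^((1:ℝ)/2) + 1) * (C2 * (n:ℝ)^(-(3:ℝ)/2)) :=
            mul_le_mul hA1 hA2 hA2nn (by positivity)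
        _ = C1*C2 * ((n:ℝ)^((1:ℝ)/2) * (n:ℝ)^(-(3:ℝ)/2)) + C2 * (n:ℝ)^(-(3:ℝ)/2) := by ring
        _ = C1*C2 * (n:ℝ)^(-(1:ℝ)) + C2 * (n:ℝ)^(-(3:ℝ)/2) := by
            rw [← Real.rpow_add hν]; norm_num
    · have t1 : Tendsto (fun n : ℕ => ((n:ℝ))^(-(1:ℝ))) atTop (nhds 0) :=
        (tendsto_rpow_neg_atTop one_pos).comp tendsto_natCast_atTop_atTop
      have t2 : Tendsto (fun n : ℕ => ((n:ℝ))^(-(3:ℝ)/2)) atTop (nhds 0) := by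
        have h := (tendsto_rpow_neg_atTop (show (0:ℝ) < 3/2 by norm_num)).comp
          (tendsto_natCast_atTop_atTop (R := ℝ))
        have : (fun n : ℕ => ((n:ℝ))^(-(3:ℝ)/2)) = fun n : ℕ => ((n:ℝ))^(-(3/2:ℝ)) := by
          norm_num
        rw [this]; exact h
      have := (t1.const_mul (C1*C2)).add (t2.const_mul C2)
      simpa using this
  · have base : Tendsto (fun n : ℕ => c * (n:ℝ)^((1:ℝ)/2)) atTop atTop :=
      Tendsto.const_mul_atTop hc
        ((tendsto_rpow_atTop (by norm_num : (0:ℝ) < 1/2)).comp tendsto_natCast_atTop_atTop)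
    apply tendsto_atTop_mono' atTop ?_ base
    rw [EventuallyLE, eventually_atTop]
    exact ⟨1, fun n hn => (main n hn).1⟩
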